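/- Let G be a finite commutative group and π a pairing on G. Let A = MonoidAlgebra ℂ G and let R̊ ∈ A ⊗[ℂ] A be the element R̊ = |G|⁻¹ • Σ_{g,h ∈ G} ((π g h)⁻¹ : ℂ) • (g ⊗ₜ h). Then the smallest ℂ-subspace B of A such that R̊ · R̊ ∈ B ⊗ A is the span of the squares: the ℂ-span of the set of all contractions (id ⊗ φ)(R̊ · R̊) ∈ A, as φ ranges over all ℂ-linear functionals A →ₗ[ℂ] ℂ, equals the ℂ-span of {single (g²) 1 | g ∈ G}. -/

import Mathlib

open scoped TensorProduct

/-- The element `R̊ = |G|⁻¹ ∑_{g,h} π(g,h)⁻¹ g ⊗ h` of `ℂ[G] ⊗ ℂ[G]`. -/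
noncomputable def Rcirc (G : Type*) [CommGroup G] [Fintype G] (π : G → G → ℂˣ) :
    MonoidAlgebra ℂ G ⊗[ℂ] MonoidAlgebra ℂ G :=
  (Fintype.card G : ℂ)⁻¹ •
    ∑ g : G, ∑ h : G, ((π g h : ℂ))⁻¹ •
      (MonoidAlgebra.single g (1 : ℂ) ⊗ₜ[ℂ] MonoidAlgebra.single h (1 : ℂ))

section aux
variable {G : Type*} [CommGroup G] [Fintype G]
    (π : G → G → ℂˣ)
    (hmul_left : ∀ g h k : G, π (g * h) k = π g k * π h k)
    (hmul_right : ∀ g h k : G, π g (h * k) = π g h * π g k)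
    (hsymm : ∀ g h : G, π g h = π h g)
    (hnondeg : ∀ g : G, (∀ h : G, π g h = 1) → g = 1)

include hmul_left in
set_option linter.unusedSectionVars false in
lemma pi_one_left : ∀ h : G, π 1 h = 1 := by
  intro h
  have := hmul_left 1 1 h
  rw [one_mul] at this
  exact (mul_eq_left.mp this.symm)

include hmul_left hsymm in
lemma pi_one_right : ∀ h : G, π h 1 = 1 := by
  intro h; rw [hsymm]; exact pi_one_left π hmul_left h

include hmul_left in
lemma pi_inv_left : ∀ g h : G, π g⁻¹ h = (π g h)⁻¹ := by
  intro g h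
  have := hmul_left g g⁻¹ h
  rw [mul_inv_cancel, pi_one_left π hmul_left] at this
  exact eq_inv_of_mul_eq_one_right this.symm

include hmul_right hmul_left hsymm in
lemma pi_inv_right : ∀ g h : G, π g h⁻¹ = (π g h)⁻¹ := by
  intro g h
  have := hmul_right g h h⁻¹
  rw [mul_inv_cancel, pi_one_right π hmul_left hsymm] at this
  exact eq_inv_of_mul_eq_one_right this.symm

include hmul_left hmul_right hnondeg in
open scoped Classical in
lemma pi_orth (x : G) :
    ∑ h : G, ((π x h : ℂ)) = if x = 1 then (Fintype.card G : ℂ) else 0 := by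
  by_cases hx : x = 1
  · subst hx
    rw [if_pos rfl]
    have h1 := pi_one_left π hmul_left
    simp [h1]
  · rw [if_neg hx]
    obtain ⟨h₀, hh₀⟩ : ∃ h₀, π x h₀ ≠ 1 := by
      by_contra hc
      push_neg at hc
      exact hx (hnondeg x hc)
    have key : ∑ h : G, ((π x h : ℂ)) = (π x h₀ : ℂ) * ∑ h : G, ((π x h : ℂ)) := by
      rw [Finset.mul_sum]
      exact Fintype.sum_equiv (Equiv.mulLeft h₀⁻¹) _ _ (by
        intro h
        simp only [Equiv.coe_mulLeft]
        rw [← Units.val_mul, ← hmul_right, mul_inv_cancel_left])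
    have : ((π x h₀ : ℂ) - 1) * ∑ h : G, ((π x h : ℂ)) = 0 := by
      rw [sub_mul, one_mul, ← key, sub_self]
    rcases mul_eq_zero.mp this with h | h
    · exfalso
      apply hh₀
      ext
      have : (π x h₀ : ℂ) = 1 := by linear_combination h
      simpa using this
    · exact h
end aux

section main
variable {G : Type*} [CommGroup G] [Fintype G]
    (π : G → G → ℂˣ)
    (hmul_left : ∀ g h k : G, π (g * h) k = π g k * π h k)
    (hmul_right : ∀ g h k : G, π g (h * k) = π g h * π g k)
    (hsymm : ∀ g h : G, π g h = π h g)
    (hnondeg : ∀ g : G, (∀ h : G, π g h = 1) → g = 1)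

include hmul_left hmul_right hsymm hnondeg in
lemma Rsq :
    Rcirc G π * Rcirc G π = (Fintype.card G : ℂ)⁻¹ •
      ∑ g : G, ∑ b : G, ((π g b : ℂ))⁻¹ •
        (MonoidAlgebra.single (g ^ 2) (1 : ℂ) ⊗ₜ[ℂ] MonoidAlgebra.single b (1 : ℂ)) := by
  classical
  rw [Rcirc, smul_mul_smul_comm]
  simp only [Finset.sum_mul, Finset.mul_sum, smul_mul_assoc, mul_smul_comm, smul_smul,
    Algebra.TensorProduct.tmul_mul_tmul, MonoidAlgebra.single_mul_single, mul_one]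
  have hcard : (Fintype.card G : ℂ) ≠ 0 := Nat.cast_ne_zero.mpr Fintype.card_ne_zero
  have hinner : ∀ x a b : G, (∑ x1 : G, (((π x x1 : ℂ))⁻¹ * ((π (a * x⁻¹) (b * x1⁻¹) : ℂ))⁻¹))
      = (if a = x ^ 2 then (Fintype.card G : ℂ) else 0) * ((π (a * x⁻¹) b : ℂ))⁻¹ := by
    intro x a b
    have step : ∀ x1 : G, ((π x x1 : ℂ))⁻¹ * ((π (a * x⁻¹) (b * x1⁻¹) : ℂ))⁻¹
        = ((π ((x * (x * a⁻¹))⁻¹) x1 : ℂ)) * ((π (a * x⁻¹) b : ℂ))⁻¹ := by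
      intro x1
      have u1 : π (a * x⁻¹) (b * x1⁻¹) = π (a * x⁻¹) b * (π (a * x⁻¹) x1)⁻¹ := by
        rw [hmul_right, pi_inv_right π hmul_left hmul_right hsymm]
      have u2 : (π (a * x⁻¹) x1)⁻¹ = π (x * a⁻¹) x1 := by
        rw [← pi_inv_left π hmul_left, mul_inv_rev, inv_inv]
      have u3 : π x x1 * π (x * a⁻¹) x1 = π (x * (x * a⁻¹)) x1 :=
        (hmul_left x (x * a⁻¹) x1).symm
      have u4 : π x x1 * π (a * x⁻¹) (b * x1⁻¹) = π (x * (x * a⁻¹)) x1 * π (a * x⁻¹) b := by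
        rw [u1, u2, ← u3, mul_comm (π (a * x⁻¹) b), ← mul_assoc]
      have u5 : ((π x x1 : ℂ)) * ((π (a * x⁻¹) (b * x1⁻¹) : ℂ))
          = ((π (x * (x * a⁻¹)) x1 : ℂ)) * ((π (a * x⁻¹) b : ℂ)) := by
        rw [← Units.val_mul, ← Units.val_mul, u4]
      have u6 : ((π ((x * (x * a⁻¹))⁻¹) x1 : ℂ)) = ((π (x * (x * a⁻¹)) x1 : ℂ))⁻¹ := by
        rw [pi_inv_left π hmul_left]
        simp
      rw [u6, ← mul_inv, u5, mul_inv]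
    rw [Finset.sum_congr rfl (fun x1 _ => step x1), ← Finset.sum_mul,
      pi_orth π hmul_left hmul_right hnondeg]
    congr 2
    simp only [eq_iff_iff]
    constructor
    · intro h
      have : x * (x * a⁻¹) = 1 := by rwa [inv_eq_one] at h
      have : a = x * x := by
        rw [← mul_assoc] at this
        exact (eq_of_div_eq_one (by rwa [div_eq_mul_inv])).symm
      rw [this, sq]
    · intro h
      rw [h]
      simp [sq, mul_assoc]
  have hQ : (∑ x : G, ∑ x1 : G, ((π x x1 : ℂ))⁻¹ •
        ∑ x2 : G, ∑ x3 : G, ((π x2 x3 : ℂ))⁻¹ •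
          (MonoidAlgebra.single (x2 * x) (1:ℂ) ⊗ₜ[ℂ] MonoidAlgebra.single (x3 * x1) (1:ℂ)))
      = (Fintype.card G : ℂ) • ∑ g : G, ∑ b : G, ((π g b : ℂ))⁻¹ •
          (MonoidAlgebra.single (g ^ 2) (1:ℂ) ⊗ₜ[ℂ] MonoidAlgebra.single b (1:ℂ)) := by
    calc
      ∑ x : G, ∑ x1 : G, ((π x x1 : ℂ))⁻¹ •
          ∑ x2 : G, ∑ x3 : G, ((π x2 x3 : ℂ))⁻¹ •
            (MonoidAlgebra.single (x2 * x) (1:ℂ) ⊗ₜ[ℂ] MonoidAlgebra.single (x3 * x1) (1:ℂ))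
        = ∑ x : G, ∑ x1 : G, ∑ a : G, ∑ b : G,
            (((π x x1 : ℂ))⁻¹ * ((π (a * x⁻¹) (b * x1⁻¹) : ℂ))⁻¹) •
              (MonoidAlgebra.single a (1:ℂ) ⊗ₜ[ℂ] MonoidAlgebra.single b (1:ℂ)) := by
          refine Finset.sum_congr rfl fun x _ => Finset.sum_congr rfl fun x1 _ => ?_
          rw [Finset.smul_sum]
          refine Fintype.sum_equiv (Equiv.mulRight x) _ _ fun x2 => ?_
          simp only [Equiv.coe_mulRight, mul_inv_cancel_right]
          rw [Finset.smul_sum]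
          refine Fintype.sum_equiv (Equiv.mulRight x1) _ _ fun x3 => ?_
          simp only [Equiv.coe_mulRight, mul_inv_cancel_right]
          rw [smul_smul]
      _ = ∑ x : G, ∑ a : G, ∑ b : G, ∑ x1 : G,
            (((π x x1 : ℂ))⁻¹ * ((π (a * x⁻¹) (b * x1⁻¹) : ℂ))⁻¹) •
              (MonoidAlgebra.single a (1:ℂ) ⊗ₜ[ℂ] MonoidAlgebra.single b (1:ℂ)) := by
          refine Finset.sum_congr rfl fun x _ => ?_
          rw [Finset.sum_comm]
          refine Finset.sum_congr rfl fun a _ => ?_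
          rw [Finset.sum_comm]
      _ = ∑ x : G, ∑ a : G, ∑ b : G,
            ((if a = x ^ 2 then (Fintype.card G : ℂ) else 0) * ((π (a * x⁻¹) b : ℂ))⁻¹) •
              (MonoidAlgebra.single a (1:ℂ) ⊗ₜ[ℂ] MonoidAlgebra.single b (1:ℂ)) := by
          refine Finset.sum_congr rfl fun x _ => Finset.sum_congr rfl fun a _ =>
            Finset.sum_congr rfl fun b _ => ?_
          rw [← Finset.sum_smul, hinner]
      _ = ∑ x : G, ∑ b : G,
            ((Fintype.card G : ℂ) * ((π x b : ℂ))⁻¹) •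
              (MonoidAlgebra.single (x ^ 2) (1:ℂ) ⊗ₜ[ℂ] MonoidAlgebra.single b (1:ℂ)) := by
          refine Finset.sum_congr rfl fun x _ => ?_
          rw [Finset.sum_eq_single (x ^ 2)]
          · refine Finset.sum_congr rfl fun b _ => ?_
            rw [if_pos rfl]
            congr 2
            rw [sq, mul_assoc, mul_inv_cancel, mul_one]
          · intro a _ ha
            rw [if_neg ha]
            simp
          · intro h
            exact absurd (Finset.mem_univ _) h
      _ = (Fintype.card G : ℂ) • ∑ g : G, ∑ b : G, ((π g b : ℂ))⁻¹ •
            (MonoidAlgebra.single (g ^ 2) (1:ℂ) ⊗ₜ[ℂ] MonoidAlgebra.single b (1:ℂ)) := by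
          rw [Finset.smul_sum]
          refine Finset.sum_congr rfl fun x _ => ?_
          rw [Finset.smul_sum]
          refine Finset.sum_congr rfl fun b _ => ?_
          rw [smul_smul]
  rw [hQ, smul_smul]
  congr 1
  field_simp

include hmul_left hmul_right hsymm hnondeg in
lemma contr (φ : MonoidAlgebra ℂ G →ₗ[ℂ] ℂ) :
    TensorProduct.rid ℂ (MonoidAlgebra ℂ G)
        (TensorProduct.map LinearMap.id φ (Rcirc G π * Rcirc G π))
      = (Fintype.card G : ℂ)⁻¹ • ∑ g : G, ∑ b : G,
          (((π g b : ℂ))⁻¹ * φ (MonoidAlgebra.single b (1 : ℂ))) •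
            MonoidAlgebra.single (g ^ 2) (1 : ℂ) := by
  rw [Rsq π hmul_left hmul_right hsymm hnondeg]
  simp only [map_smul, map_sum, TensorProduct.map_tmul, LinearMap.id_coe, id_eq,
    TensorProduct.rid_tmul, smul_smul]

include hmul_left hmul_right hnondeg in
open scoped Classical in
lemma collapse (g₀ : G) : ∀ g : G, ∑ b : G, (((π g b : ℂ))⁻¹ * ((π g₀ b : ℂ)))
    = if g⁻¹ * g₀ = 1 then (Fintype.card G : ℂ) else 0 := by
  intro g
  rw [← pi_orth π hmul_left hmul_right hnondeg (g⁻¹ * g₀)]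
  refine Finset.sum_congr rfl fun b _ => ?_
  rw [hmul_left, Units.val_mul, pi_inv_left π hmul_left, Units.val_inv_eq_inv_val]

include hmul_left hmul_right hsymm hnondeg in
lemma contr_eval (g₀ : G) (φ : MonoidAlgebra ℂ G →ₗ[ℂ] ℂ)
    (hφ : ∀ b : G, φ (MonoidAlgebra.single b (1 : ℂ)) = ((π g₀ b : ℂ))) :
    TensorProduct.rid ℂ (MonoidAlgebra ℂ G)
        (TensorProduct.map LinearMap.id φ (Rcirc G π * Rcirc G π))
      = MonoidAlgebra.single (g₀ ^ 2) (1 : ℂ) := by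
  classical
  have hcard : (Fintype.card G : ℂ) ≠ 0 := Nat.cast_ne_zero.mpr Fintype.card_ne_zero
  rw [contr π hmul_left hmul_right hsymm hnondeg φ]
  simp only [hφ]
  simp only [← Finset.sum_smul]
  simp only [collapse π hmul_left hmul_right hnondeg g₀]
  rw [Finset.sum_eq_single g₀]
  · rw [if_pos (by simp), smul_smul, inv_mul_cancel₀ hcard, one_smul]
  · intro g _ hg
    rw [if_neg (by simpa [inv_mul_eq_one] using hg), zero_smul]
  · intro h
    exact absurd (Finset.mem_univ _) h

end main

/-- The smallest subspace `B ⊆ ℂ[G]` with `R̊·R̊ ∈ B ⊗ ℂ[G]` — the span of the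
contractions `(id ⊗ φ)(R̊·R̊)` over all linear functionals `φ` — is the span of the
squares `{g² : g ∈ G}`. -/
theorem stmt_4 {G : Type*} [CommGroup G] [Fintype G]
    (π : G → G → ℂˣ)
    (hmul_left : ∀ g h k : G, π (g * h) k = π g k * π h k)
    (hmul_right : ∀ g h k : G, π g (h * k) = π g h * π g k)
    (hsymm : ∀ g h : G, π g h = π h g)
    (hnondeg : ∀ g : G, (∀ h : G, π g h = 1) → g = 1) :
    Submodule.span ℂ
        { y : MonoidAlgebra ℂ G | ∃ φ : MonoidAlgebra ℂ G →ₗ[ℂ] ℂ,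
            y = TensorProduct.rid ℂ (MonoidAlgebra ℂ G)
              (TensorProduct.map LinearMap.id φ (Rcirc G π * Rcirc G π)) } =
      Submodule.span ℂ (Set.range fun g : G => MonoidAlgebra.single (g ^ 2) (1 : ℂ)) := by
  classical
  apply le_antisymm
  · rw [Submodule.span_le]
    rintro y ⟨φ, rfl⟩
    rw [contr π hmul_left hmul_right hsymm hnondeg φ]
    exact Submodule.smul_mem _ _ (Submodule.sum_mem _ fun g _ => Submodule.sum_mem _ fun b _ =>
      Submodule.smul_mem _ _ (Submodule.subset_span ⟨g, rfl⟩))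
  · rw [Submodule.span_le]
    rintro y ⟨g₀, rfl⟩
    apply Submodule.subset_span
    refine ⟨(Finsupp.linearCombination ℂ (fun b : G => ((π g₀ b : ℂ)))
      ∘ₗ (MonoidAlgebra.coeffLinearEquiv ℂ).toLinearMap : MonoidAlgebra ℂ G →ₗ[ℂ] ℂ),
      Eq.symm (contr_eval π hmul_left hmul_right hsymm hnondeg g₀ _ ?_)⟩
    intro b
    show (Finsupp.linearCombination ℂ (fun b : G => ((π g₀ b : ℂ)))) (Finsupp.single b (1 : ℂ))
      = ((π g₀ b : ℂ))
    rw [Finsupp.linearCombination_single, one_smul]
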